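/- Let 𝒜 be a central arrangement in ℂⁿ with defining polynomial p = p₁⋯p_r and let m ≥ 1. For a family u = (u_α)_{|α|=m} of polynomials, u ∈ D^(m)(𝒜) if and only if there exists a family w = (w_β)_{|β|<m} of polynomials such that Σ_{|α|=m} u_α · ∂^α(x^β p) + p·w_β = 0 for every β ∈ ℕⁿ with |β| < m; moreover, for each u ∈ D^(m)(𝒜) such a family w is unique. Hence the projection (u,w) ↦ u from the syzygy module {(u,w) : Σ_α u_α ∂^α(x^β p) + p w_β = 0 for all |β| < m} to D^(m)(𝒜) is an isomorphism of S-modules. -/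

import Mathlib

open MvPolynomial

noncomputable section

/-- The polynomial ring `S = ℂ[x₁,…,xₙ]`. -/
abbrev S (n : ℕ) : Type := MvPolynomial (Fin n) ℂ

/-- The finite set of exponent vectors `α ∈ ℕⁿ` with `|α| = m`. -/
def degIdx (n m : ℕ) : Finset (Fin n → ℕ) :=
  (Fintype.piFinset fun _ : Fin n => Finset.range (m + 1)).filter fun α => ∑ i, α i = m

/-- The differential operator `∂^α`, the composition of the partial derivatives
`∂/∂xᵢ` applied `αᵢ` times. -/
def pd {n : ℕ} (α : Fin n → ℕ) : Module.End ℂ (S n) :=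
  (List.ofFn fun i : Fin n => ((pderiv (R := ℂ) i).toLinearMap) ^ (α i)).prod

/-- The action of an order-`m` differential operator with polynomial coefficients
`c = (c_α)_{|α| = m}` on a polynomial: `c(f) = Σ_{|α|=m} c_α ∂^α f`. -/
def applyOp {n m : ℕ} (c : degIdx n m → S n) (f : S n) : S n :=
  ∑ α : degIdx n m, c α * pd (α : Fin n → ℕ) f

lemma applyOp_add {n m : ℕ} (a b : degIdx n m → S n) (f : S n) :
    applyOp (a + b) f = applyOp a f + applyOp b f := by
  simp [applyOp, add_mul, Finset.sum_add_distrib]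

lemma applyOp_smul {n m : ℕ} (s : S n) (a : degIdx n m → S n) (f : S n) :
    applyOp (s • a) f = s * applyOp a f := by
  simp [applyOp, Finset.mul_sum, mul_assoc]

lemma applyOp_zero {n m : ℕ} (f : S n) : applyOp (0 : degIdx n m → S n) f = 0 := by
  simp [applyOp]

/-- `D^(m)(p)`: the `S`-module of order-`m` differential operators with polynomial
coefficients preserving the principal ideal `⟨p⟩`. -/
def Dm {n : ℕ} (m : ℕ) (p : S n) : Submodule (S n) (degIdx n m → S n) where
  carrier := {c | ∀ f ∈ Ideal.span {p}, applyOp c f ∈ Ideal.span {p}}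
  add_mem' := by
    intro a b ha hb f hf
    rw [applyOp_add]
    exact Ideal.add_mem _ (ha f hf) (hb f hf)
  zero_mem' := by
    intro f hf
    rw [applyOp_zero]
    exact Ideal.zero_mem _
  smul_mem' := by
    intro s c hc f hf
    rw [applyOp_smul]
    exact Ideal.mul_mem_left _ _ (hc f hf)

/-- A nonzero linear form. -/
def IsLinearForm {n : ℕ} (q : S n) : Prop := q ≠ 0 ∧ q.IsHomogeneous 1

/-- The linear forms of an arrangement are pairwise non-proportional. -/
def PairwiseNonProportional {n r : ℕ} (p : Fin r → S n) : Prop :=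
  ∀ i j : Fin r, i ≠ j → ∀ a : ℂ, p i ≠ a • p j

end

noncomputable section

/-- The finite set of exponent vectors `β ∈ ℕⁿ` with `|β| < m`. -/
def degLtIdx (n m : ℕ) : Finset (Fin n → ℕ) :=
  (Fintype.piFinset fun _ : Fin n => Finset.range (m + 1)).filter fun β => ∑ i, β i < m

/-- The syzygy module `{(u,w) : Σ_α u_α ∂^α(x^β p) + p·w_β = 0 for all |β| < m}`. -/
def SyzMod {n : ℕ} (m : ℕ) (p : S n) :
    Submodule (S n) ((degIdx n m → S n) × (degLtIdx n m → S n)) where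
  carrier := {uw | ∀ β : degLtIdx n m,
    applyOp uw.1 ((∏ i, X i ^ (β : Fin n → ℕ) i) * p) + p * uw.2 β = 0}
  add_mem' := by
    intro a b ha hb β
    have ha' := ha β; have hb' := hb β
    simp only [Prod.fst_add, Prod.snd_add, applyOp_add, Pi.add_apply, mul_add] at *
    linear_combination ha' + hb'
  zero_mem' := by
    intro β
    simp [applyOp_zero]
  smul_mem' := by
    intro s a ha β
    have ha' := ha β
    simp only [Prod.smul_fst, Prod.smul_snd, applyOp_smul, Pi.smul_apply, smul_eq_mul]
    linear_combination s * ha'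

noncomputable section AuxSyzygy

lemma pd_zero' {n : ℕ} : pd (0 : Fin n → ℕ) = 1 := by
  simp [pd, List.ofFn_const, pow_zero]

lemma list_ofFn_prod_update' {M : Type*} [Monoid M] :
    ∀ {k : ℕ} (f : Fin k → M) (i : Fin k) (a : M),
      (∀ j, j < i → Commute a (f j)) →
      (List.ofFn (Function.update f i (a * f i))).prod = a * (List.ofFn f).prod := by
  intro k
  induction k with
  | zero => exact fun f i => i.elim0
  | succ k ih =>
    intro f i a h
    rw [List.ofFn_succ, List.ofFn_succ, List.prod_cons, List.prod_cons]
    rcases Fin.eq_zero_or_eq_succ i with rfl | ⟨j, rfl⟩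
    · have h2 : (fun t : Fin k => Function.update f 0 (a * f 0) t.succ) = fun t => f t.succ := by
        funext t
        simp [Function.update_of_ne (Fin.succ_ne_zero t)]
      rw [show (Function.update f 0 (a * f 0)) 0 = a * f 0 from Function.update_self _ _ _, h2,
        mul_assoc]
    · have h1 : Function.update f j.succ (a * f j.succ) 0 = f 0 :=
        Function.update_of_ne (Fin.succ_ne_zero j).symm _ _
      have h2 : (fun t : Fin k => Function.update f j.succ (a * f j.succ) t.succ) =
          Function.update (fun t : Fin k => f t.succ) j (a * f j.succ) := by
        funext t
        by_cases ht : t = j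
        · subst ht; simp
        · have h3 : t.succ ≠ j.succ := fun hc => ht (Fin.succ_injective _ hc)
          simp [Function.update_of_ne ht, Function.update_of_ne h3]
      have h4 := ih (fun t : Fin k => f t.succ) j a (fun t ht => h t.succ (by simpa using ht))
      rw [h1, h2, h4, ← mul_assoc, ← (h 0 (Fin.succ_pos j)).eq, mul_assoc]

lemma pderiv_comm' {n : ℕ} (i j : Fin n) (f : S n) :
    pderiv i (pderiv j f) = pderiv j (pderiv i f) := by
  induction f using MvPolynomial.induction_on' with
  | monomial s a =>
    rcases eq_or_ne i j with rfl | hij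
    · rfl
    · simp only [pderiv_monomial]
      rw [Finsupp.tsub_apply, Finsupp.tsub_apply, Finsupp.single_eq_of_ne' hij,
        Finsupp.single_eq_of_ne' (Ne.symm hij), tsub_zero, tsub_zero, tsub_tsub, tsub_tsub,
        add_comm (Finsupp.single j 1)]
      ring_nf
  | add p q hp hq => simp [hp, hq]

lemma commute_pd' {n : ℕ} (i : Fin n) (α : Fin n → ℕ) (j : Fin n) :
    Commute ((pderiv (R := ℂ) i).toLinearMap) (((pderiv (R := ℂ) j).toLinearMap) ^ (α j)) := by
  apply Commute.pow_right
  apply LinearMap.ext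
  intro f
  exact pderiv_comm' i j f

lemma pd_succ' {n : ℕ} (α : Fin n → ℕ) (i : Fin n) :
    pd (α + (Pi.single i 1 : Fin n → ℕ)) = (pderiv (R := ℂ) i).toLinearMap * pd α := by
  have hfun : (fun j => ((pderiv (R := ℂ) j).toLinearMap) ^ ((α + (Pi.single i 1 : Fin n → ℕ)) j)) =
      Function.update (fun j => ((pderiv (R := ℂ) j).toLinearMap) ^ (α j)) i
        ((pderiv (R := ℂ) i).toLinearMap * ((pderiv (R := ℂ) i).toLinearMap) ^ (α i)) := by
    funext j
    by_cases hj : j = i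
    · subst hj
      simp [pow_succ']
    · simp [Function.update_of_ne hj, Pi.single_eq_of_ne hj]
  rw [pd, hfun, list_ofFn_prod_update' _ _ _ (fun j _ => commute_pd' i α j)]
  rfl

lemma pd_succ_apply' {n : ℕ} (α : Fin n → ℕ) (i : Fin n) (f : S n) :
    pd (α + (Pi.single i 1 : Fin n → ℕ)) f = pderiv i (pd α f) := by
  rw [pd_succ']; rfl

lemma exists_succ_decomp' {n : ℕ} (δ : Fin n → ℕ) (hδ : δ ≠ 0) :
    ∃ (i : Fin n) (δ' : Fin n → ℕ), δ = δ' + (Pi.single i 1 : Fin n → ℕ) ∧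
      (∑ j, δ' j) + 1 = ∑ j, δ j ∧ δ' ≤ δ ∧ δ' i + 1 = δ i := by
  have : ∃ i, δ i ≠ 0 := by
    by_contra hc
    push_neg at hc
    exact hδ (funext fun i => hc i)
  obtain ⟨i, hi⟩ := this
  refine ⟨i, Function.update δ i (δ i - 1), ?_, ?_, ?_, ?_⟩
  · funext j
    by_cases hj : j = i
    · subst hj
      simp [Nat.sub_add_cancel (Nat.one_le_iff_ne_zero.2 hi)]
    · simp [Function.update_of_ne hj, Pi.single_eq_of_ne hj]
  · rw [Finset.sum_update_of_mem (Finset.mem_univ i), Finset.sdiff_singleton_eq_erase]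
    have h1 : δ i + ∑ j ∈ Finset.univ.erase i, δ j = ∑ j, δ j :=
      Finset.add_sum_erase _ _ (Finset.mem_univ i)
    omega
  · intro j
    by_cases hj : j = i
    · subst hj; simp
    · simp [Function.update_of_ne hj]
  · simp [Nat.sub_add_cancel (Nat.one_le_iff_ne_zero.2 hi)]

def eF {n : ℕ} (β : Fin n → ℕ) : Fin n →₀ ℕ := Finsupp.equivFunOnFinite.symm β

@[simp] lemma eF_apply {n : ℕ} (β : Fin n → ℕ) (i : Fin n) : eF β i = β i := rfl

lemma pd_monomial' {n : ℕ} : ∀ (N : ℕ) (δ : Fin n → ℕ), (∑ i, δ i = N) →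
    ∀ (s : Fin n →₀ ℕ) (a : ℂ),
    pd δ (monomial s a) =
      monomial (s - eF δ) (a * (∏ i, (s i).descFactorial (δ i) : ℕ)) := by
  intro N
  induction N with
  | zero =>
    intro δ hδ s a
    have h0 : δ = 0 := by
      funext i
      exact (Finset.sum_eq_zero_iff.1 hδ) i (Finset.mem_univ i)
    subst h0
    have : eF (0 : Fin n → ℕ) = 0 := by ext j; simp
    simp [pd_zero', this]
  | succ N ih =>
    intro δ hδ s a
    have hδ0 : δ ≠ 0 := by
      intro hc; subst hc; simp at hδ
    obtain ⟨i, δ', hdec, hsum, hle, hsucc⟩ := exists_succ_decomp' δ hδ0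
    have hδ' : ∑ j, δ' j = N := by omega
    have hpd : pd δ ((monomial s) a) = pderiv i (pd δ' ((monomial s) a)) := by
      rw [hdec, pd_succ_apply']
    rw [hpd, ih δ' hδ' s a, pderiv_monomial]
    have hexp : s - eF δ' - Finsupp.single i 1 = s - eF δ := by
      rw [tsub_tsub]
      congr 1
      ext j
      by_cases hj : j = i
      · subst hj
        simp [hdec]
      · simp [hdec, Finsupp.single_eq_of_ne' (Ne.symm hj), Pi.single_eq_of_ne hj]
    have hKnat : (∏ j, (s j).descFactorial (δ j)) =
        (s i - δ' i) * ∏ j, (s j).descFactorial (δ' j) := by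
      rw [← Finset.mul_prod_erase _ (fun j => (s j).descFactorial (δ j)) (Finset.mem_univ i),
        ← Finset.mul_prod_erase _ (fun j => (s j).descFactorial (δ' j)) (Finset.mem_univ i)]
      have he : ∏ j ∈ Finset.univ.erase i, (s j).descFactorial (δ j) =
          ∏ j ∈ Finset.univ.erase i, (s j).descFactorial (δ' j) := by
        apply Finset.prod_congr rfl
        intro j hj
        have : δ j = δ' j := by
          rw [hdec]
          simp [Pi.single_eq_of_ne (Finset.ne_of_mem_erase hj)]
        rw [this]
      rw [he, ← hsucc, Nat.descFactorial_succ, mul_assoc]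
    have hcoef : (s - eF δ') i = s i - δ' i := by
      simp [Finsupp.tsub_apply]
    rw [hexp, hcoef, hKnat]
    congr 1
    push_cast
    ring

lemma exists_coeffs' {n : ℕ} (p : S n) : ∀ (N : ℕ) (α : Fin n → ℕ), (∑ i, α i = N) →
    ∃ c : (Fin n → ℕ) → S n,
      c α = p ∧ (∀ δ, ¬ δ ≤ α → c δ = 0) ∧
      ∀ (B : Finset (Fin n → ℕ)), (∀ δ, δ ≤ α → δ ∈ B) →
        ∀ g : S n, pd α (g * p) = ∑ δ ∈ B, pd δ g * c δ := by
  classical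
  intro N
  induction N with
  | zero =>
    intro α hα
    have h0 : α = 0 := funext fun i => (Finset.sum_eq_zero_iff.1 hα) i (Finset.mem_univ i)
    subst h0
    refine ⟨fun δ => if δ = 0 then p else 0, if_pos rfl, ?_, ?_⟩
    · intro δ hδ
      show (if δ = 0 then p else 0) = 0
      rw [if_neg]
      intro hc; subst hc; exact hδ le_rfl
    · intro B hB g
      rw [Finset.sum_eq_single_of_mem 0 (hB 0 le_rfl)]
      · simp [pd_zero']
      · intro δ _ hδ
        simp [if_neg hδ]
  | succ N ih =>
    intro α hα
    have hα0 : α ≠ 0 := by intro hc; subst hc; simp at hα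
    obtain ⟨i, α', hdec, hsum, hle, hsucc⟩ := exists_succ_decomp' α hα0
    have hN : ∑ j, α' j = N := by omega
    obtain ⟨c', hc'top, hc'supp, hc'sum⟩ := ih α' hN
    set e : Fin n → ℕ := Pi.single i 1 with he
    have hei : e i = 1 := Pi.single_eq_same i 1
    have hej : ∀ j, j ≠ i → e j = 0 := fun j hj => Pi.single_eq_of_ne hj 1
    have hadd_sub : ∀ δ : Fin n → ℕ, (δ + e) - e = δ := by
      intro δ; funext j; simp
    have hsub_add : ∀ δ : Fin n → ℕ, 1 ≤ δ i → (δ - e) + e = δ := by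
      intro δ h; funext j
      by_cases hj : j = i
      · subst hj
        simp only [Pi.add_apply, Pi.sub_apply, hei]
        omega
      · simp [hej j hj]
    have hαα' : α - e = α' := by rw [hdec, hadd_sub]
    have hα'le : ∀ δ : Fin n → ℕ, δ ≤ α' → δ + e ≤ α := by
      intro δ h
      rw [hdec]
      exact fun j => Nat.add_le_add (h j) le_rfl
    have hα'i : ¬ α ≤ α' := by
      intro hc
      have h2 : α i ≤ α' i := hc i
      omega
    refine ⟨fun δ => (if 1 ≤ δ i then c' (δ - e) else 0) + pderiv i (c' δ), ?_, ?_, ?_⟩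
    · show (if 1 ≤ α i then c' (α - e) else 0) + pderiv i (c' α) = p
      rw [if_pos (by omega : 1 ≤ α i), hαα', hc'top, hc'supp α hα'i, map_zero, add_zero]
    · intro δ hδ
      show (if 1 ≤ δ i then c' (δ - e) else 0) + pderiv i (c' δ) = 0
      have h1 : (if 1 ≤ δ i then c' (δ - e) else 0) = 0 := by
        by_cases hδi : 1 ≤ δ i
        · rw [if_pos hδi, hc'supp]
          intro hc
          apply hδ
          calc δ = (δ - e) + e := (hsub_add δ hδi).symm
          _ ≤ α' + e := fun j => Nat.add_le_add (hc j) le_rfl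
          _ = α := hdec.symm
        · exact if_neg hδi
      have h2 : c' δ = 0 := by
        apply hc'supp
        intro hc
        exact hδ (le_trans hc hle)
      rw [h1, h2, map_zero, add_zero]
    · intro B hB g
      have hB' : ∀ δ, δ ≤ α' → δ ∈ B := fun δ h => hB δ (le_trans h hle)
      have step1 : pd α (g * p) = pderiv i (pd α' (g * p)) := by
        rw [hdec, pd_succ_apply']
      rw [step1, hc'sum B hB' g, map_sum]
      have step2 : ∀ δ ∈ B, pderiv i (pd δ g * c' δ) =
          pd (δ + e) g * c' δ + pd δ g * pderiv i (c' δ) := by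
        intro δ _
        rw [pderiv_mul, pd_succ_apply']
      rw [Finset.sum_congr rfl step2, Finset.sum_add_distrib]
      have reindex : ∑ δ ∈ B, pd (δ + e) g * c' δ =
          ∑ δ ∈ B, pd δ g * (if 1 ≤ δ i then c' (δ - e) else 0) := by
        have lhs_eq : ∑ δ ∈ B, pd (δ + e) g * c' δ =
            ∑ δ ∈ B.filter (fun δ => δ ≤ α'), pd (δ + e) g * c' δ := by
          refine (Finset.sum_subset (Finset.filter_subset _ _) ?_).symm
          intro δ _ hδ
          rw [Finset.mem_filter, not_and] at hδ
          by_cases hδB : δ ∈ B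
          · rw [hc'supp δ (hδ hδB), mul_zero]
          · simp_all
        have mid_eq : ∑ δ ∈ B.filter (fun δ => δ ≤ α'), pd (δ + e) g * c' δ =
            ∑ δ ∈ B.filter (fun δ => 1 ≤ δ i ∧ δ - e ≤ α'), pd δ g * c' (δ - e) := by
          refine Finset.sum_nbij' (fun δ => δ + e) (fun δ => δ - e) ?_ ?_ ?_ ?_ ?_
          · intro δ hδ
            rw [Finset.mem_filter] at hδ ⊢
            refine ⟨hB _ (hα'le δ hδ.2), ?_, ?_⟩
            · show 1 ≤ δ i + e i; rw [hei]; omega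
            · rw [hadd_sub]; exact hδ.2
          · intro δ hδ
            rw [Finset.mem_filter] at hδ ⊢
            exact ⟨hB' _ hδ.2.2, hδ.2.2⟩
          · intro δ _; exact hadd_sub δ
          · intro δ hδ
            rw [Finset.mem_filter] at hδ
            exact hsub_add δ hδ.2.1
          · intro δ _
            rw [hadd_sub]
        have rhs_eq : ∑ δ ∈ B.filter (fun δ => 1 ≤ δ i ∧ δ - e ≤ α'), pd δ g * c' (δ - e) =
            ∑ δ ∈ B, pd δ g * (if 1 ≤ δ i then c' (δ - e) else 0) := by
          rw [Finset.sum_congr rfl (fun δ hδ => ?_)]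
          · refine Finset.sum_subset (Finset.filter_subset _ _) ?_
            intro δ _ hδ
            rw [Finset.mem_filter, not_and] at hδ
            by_cases hδB : δ ∈ B
            · by_cases hδi : 1 ≤ δ i
              · rw [if_pos hδi, hc'supp _ (by
                  intro hc
                  exact (hδ hδB) ⟨hδi, hc⟩), mul_zero]
              · rw [if_neg hδi, mul_zero]
            · simp_all
          · rw [Finset.mem_filter] at hδ
            rw [if_pos hδ.2.1]
        rw [lhs_eq, mid_eq, rhs_eq]
      rw [reindex, ← Finset.sum_add_distrib]
      exact Finset.sum_congr rfl fun δ _ => by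
        show _ = pd δ g * ((if 1 ≤ δ i then c' (δ - e) else 0) + pderiv i (c' δ))
        rw [mul_add]

lemma prod_X_pow_eq {n : ℕ} (β : Fin n → ℕ) :
    (∏ i, X i ^ β i : S n) = monomial (eF β) 1 := by
  rw [← prod_X_pow_eq_monomial]
  refine (Finset.prod_subset (Finset.subset_univ _) ?_).symm
  intro i _ hi
  rw [Finsupp.notMem_support_iff] at hi
  rw [show (eF β) i = β i from rfl] at hi
  rw [hi, pow_zero]

lemma eq_of_le_of_sum_eq {n : ℕ} {δ ε : Fin n → ℕ} (hle : δ ≤ ε)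
    (hsum : ∑ i, δ i = ∑ i, ε i) : δ = ε := by
  funext i
  by_contra hne
  have hlt : δ i < ε i := lt_of_le_of_ne (hle i) hne
  have := Finset.sum_lt_sum (fun j _ => hle j) ⟨i, Finset.mem_univ i, hlt⟩
  omega

set_option maxHeartbeats 2000000 in
lemma key_dvd {n m : ℕ} (p : S n) (u : degIdx n m → S n)
    (h : ∀ β : degLtIdx n m, p ∣ applyOp u ((∏ i, X i ^ (β : Fin n → ℕ) i) * p)) :
    ∀ g : S n, p ∣ applyOp u (g * p) := by
  classical
  set BOX : Finset (Fin n → ℕ) := Fintype.piFinset fun _ : Fin n => Finset.range (m + 1)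
    with hBOX
  have memBOX : ∀ δ : Fin n → ℕ, δ ∈ BOX ↔ ∀ i, δ i ≤ m := by
    intro δ
    rw [hBOX, Fintype.mem_piFinset]
    exact forall_congr' fun i => by rw [Finset.mem_range, Nat.lt_succ_iff]
  have hdegIdx : ∀ α : degIdx n m, ∀ i, (α : Fin n → ℕ) i ≤ m := by
    intro α i
    have := (Finset.mem_filter.1 α.2).1
    exact (memBOX _).1 this i
  have hdegsum : ∀ α : degIdx n m, ∑ i, (α : Fin n → ℕ) i = m :=
    fun α => (Finset.mem_filter.1 α.2).2
  choose c hctop hcsupp hcsum using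
    fun α : degIdx n m => exists_coeffs' p (∑ i, (α : Fin n → ℕ) i) (α : Fin n → ℕ) rfl
  set b : (Fin n → ℕ) → S n := fun δ => ∑ α : degIdx n m, u α * c α δ with hb
  have hlowerBOX : ∀ α : degIdx n m, ∀ δ, δ ≤ (α : Fin n → ℕ) → δ ∈ BOX := by
    intro α δ hδ
    rw [memBOX]
    exact fun i => le_trans (hδ i) (hdegIdx α i)
  have hrep : ∀ g : S n, applyOp u (g * p) = ∑ δ ∈ BOX, pd δ g * b δ := by
    intro g
    rw [applyOp]
    calc ∑ α : degIdx n m, u α * pd (α : Fin n → ℕ) (g * p)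
        = ∑ α : degIdx n m, ∑ δ ∈ BOX, u α * (pd δ g * c α δ) := by
          refine Finset.sum_congr rfl fun α _ => ?_
          rw [hcsum α BOX (hlowerBOX α) g, Finset.mul_sum]
      _ = ∑ δ ∈ BOX, ∑ α : degIdx n m, u α * (pd δ g * c α δ) := Finset.sum_comm
      _ = ∑ δ ∈ BOX, pd δ g * b δ := by
          refine Finset.sum_congr rfl fun δ _ => ?_
          rw [hb, Finset.mul_sum]
          exact Finset.sum_congr rfl fun α _ => by ring
  have hpd_mono1 : ∀ δ β : Fin n → ℕ, ¬ δ ≤ β → pd δ (monomial (eF β) 1) = 0 := by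
    intro δ β hle
    rw [pd_monomial' (∑ i, δ i) δ rfl]
    have : ∃ i, β i < δ i := by
      by_contra hc
      push_neg at hc
      exact hle fun i => hc i
    obtain ⟨i, hi⟩ := this
    have hzero : ∏ j, ((eF β) j).descFactorial (δ j) = 0 := by
      apply Finset.prod_eq_zero (Finset.mem_univ i)
      rw [eF_apply]
      exact Nat.descFactorial_eq_zero_iff_lt.2 hi
    rw [hzero]
    simp
  have hpd_mono2 : ∀ δ : Fin n → ℕ,
      pd δ (monomial (eF δ) 1) = C ((∏ i, Nat.factorial (δ i) : ℕ) : ℂ) := by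
    intro δ
    rw [pd_monomial' (∑ i, δ i) δ rfl]
    have h1 : eF δ - eF δ = 0 := tsub_self _
    have h2 : ∏ j, ((eF δ) j).descFactorial (δ j) = ∏ i, Nat.factorial (δ i) := by
      refine Finset.prod_congr rfl fun j _ => ?_
      rw [eF_apply, Nat.descFactorial_self]
    rw [h1, h2, one_mul, monomial_zero']
  have main : ∀ K : ℕ, ∀ δ : Fin n → ℕ, δ ∈ BOX → ∑ i, δ i = K → p ∣ b δ := by
    intro K
    induction K using Nat.strong_induction_on with
    | _ K ih =>
      intro δ hδBOX hδK
      rcases lt_trichotomy K m with hK | hK | hK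
      · have hmem : δ ∈ degLtIdx n m := Finset.mem_filter.2 ⟨hδBOX, by omega⟩
        have hdvd := h ⟨δ, hmem⟩
        rw [show ((⟨δ, hmem⟩ : degLtIdx n m) : Fin n → ℕ) = δ from rfl, prod_X_pow_eq δ,
          hrep] at hdvd
        have hsplit : pd δ (monomial (eF δ) 1) * b δ +
            ∑ δ' ∈ BOX.erase δ, pd δ' (monomial (eF δ) 1) * b δ' =
            ∑ δ' ∈ BOX, pd δ' (monomial (eF δ) 1) * b δ' :=
          Finset.add_sum_erase BOX _ hδBOX
        have hrest : p ∣ ∑ δ' ∈ BOX.erase δ, pd δ' (monomial (eF δ) 1) * b δ' := by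
          refine Finset.dvd_sum fun δ' hδ' => ?_
          by_cases hle : δ' ≤ δ
          · have hne : δ' ≠ δ := Finset.ne_of_mem_erase hδ'
            have hlt : ∑ i, δ' i < K := by
              have hlesum := Finset.sum_le_sum (s := Finset.univ) fun i _ => hle i
              rcases eq_or_lt_of_le hlesum with heq | hlt
              · exact absurd (eq_of_le_of_sum_eq hle (by omega)) hne
              · omega
            exact Dvd.dvd.mul_left
              (ih _ hlt δ' (Finset.mem_of_mem_erase hδ') rfl) _
          · rw [hpd_mono1 δ' δ hle, zero_mul]
            exact dvd_zero p
        have htop : p ∣ pd δ (monomial (eF δ) 1) * b δ := by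
          have := dvd_sub hdvd hrest
          rw [← hsplit, add_sub_cancel_right] at this
          exact this
        rw [hpd_mono2 δ] at htop
        have hne0 : ((∏ i, Nat.factorial (δ i) : ℕ) : ℂ) ≠ 0 := by
          rw [Nat.cast_ne_zero]
          exact Finset.prod_ne_zero_iff.2 fun i _ => Nat.factorial_ne_zero _
        have hbrw : b δ = C (((∏ i, Nat.factorial (δ i) : ℕ) : ℂ)⁻¹) *
            (C ((∏ i, Nat.factorial (δ i) : ℕ) : ℂ) * b δ) := by
          rw [← mul_assoc, ← C_mul, inv_mul_cancel₀ hne0, C_1, one_mul]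
        rw [hbrw]
        exact Dvd.dvd.mul_left htop _
      · have hmem : δ ∈ degIdx n m := Finset.mem_filter.2 ⟨hδBOX, by omega⟩
        have hbδ : b δ = u ⟨δ, hmem⟩ * c ⟨δ, hmem⟩ δ := by
          rw [hb]
          refine Finset.sum_eq_single_of_mem (⟨δ, hmem⟩ : {x // x ∈ degIdx n m})
            (Finset.mem_univ _) ?_
          intro α _ hne
          rw [hcsupp α δ, mul_zero]
          intro hle
          apply hne
          have : δ = (α : Fin n → ℕ) :=
            eq_of_le_of_sum_eq hle (by rw [hdegsum α]; omega)
          exact Subtype.ext this.symm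
        rw [hbδ, show c ⟨δ, hmem⟩ δ = p from hctop ⟨δ, hmem⟩]
        exact Dvd.dvd.mul_left dvd_rfl _
      · have hbδ : b δ = 0 := by
          rw [hb]
          refine Finset.sum_eq_zero fun α _ => ?_
          rw [hcsupp α δ, mul_zero]
          intro hle
          have := Finset.sum_le_sum (s := Finset.univ) fun i _ => hle i
          rw [hdegsum α] at this
          omega
        rw [hbδ]
        exact dvd_zero p
  intro g
  rw [hrep g]
  exact Finset.dvd_sum fun δ hδ => Dvd.dvd.mul_left (main _ δ hδ rfl) _

end AuxSyzygy


/-- `u ∈ D^(m)(𝒜)` iff there is a family `w = (w_β)_{|β|<m}` with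
`Σ_{|α|=m} u_α ∂^α(x^β p) + p·w_β = 0` for all `|β| < m`; for `u ∈ D^(m)(𝒜)` such a
`w` is unique, and the projection `(u,w) ↦ u` is an `S`-module isomorphism from the
syzygy module onto `D^(m)(𝒜)`. -/

theorem syzygy_description {n r m : ℕ} (hm : 1 ≤ m) (hr : 1 ≤ r) (p : Fin r → S n)
    (hlin : ∀ i, IsLinearForm (p i)) (hnp : PairwiseNonProportional p) :
    (∀ u : degIdx n m → S n,
      u ∈ Dm m (∏ i, p i) ↔
        ∃ w : degLtIdx n m → S n, ∀ β : degLtIdx n m,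
          applyOp u ((∏ i, X i ^ (β : Fin n → ℕ) i) * ∏ j, p j) + (∏ j, p j) * w β = 0) ∧
    (∀ u : degIdx n m → S n, ∀ w w' : degLtIdx n m → S n,
      (∀ β : degLtIdx n m,
        applyOp u ((∏ i, X i ^ (β : Fin n → ℕ) i) * ∏ j, p j) + (∏ j, p j) * w β = 0) →
      (∀ β : degLtIdx n m,
        applyOp u ((∏ i, X i ^ (β : Fin n → ℕ) i) * ∏ j, p j) + (∏ j, p j) * w' β = 0) →
      w = w') ∧
    ∃ e : SyzMod m (∏ i, p i) ≃ₗ[S n] Dm m (∏ i, p i),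
      ∀ uw : SyzMod m (∏ i, p i), (e uw : degIdx n m → S n) = (uw : (degIdx n m → S n) × (degLtIdx n m → S n)).1 := by
  classical
  set P : S n := ∏ i, p i with hPdef
  have hP : P ≠ 0 := by
    rw [hPdef]
    exact Finset.prod_ne_zero_iff.2 fun i _ => (hlin i).1
  have part1 : ∀ u : degIdx n m → S n,
      u ∈ Dm m P ↔
        ∃ w : degLtIdx n m → S n, ∀ β : degLtIdx n m,
          applyOp u ((∏ i, X i ^ (β : Fin n → ℕ) i) * P) + P * w β = 0 := by
    intro u
    constructor
    · intro hu
      have hd : ∀ β : degLtIdx n m,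
          P ∣ applyOp u ((∏ i, X i ^ (β : Fin n → ℕ) i) * P) := by
        intro β
        have hmem : ((∏ i, X i ^ (β : Fin n → ℕ) i) * P) ∈ Ideal.span {P} :=
          Ideal.mem_span_singleton.2 (dvd_mul_left P _)
        exact Ideal.mem_span_singleton.1 (hu _ hmem)
      choose q hq using hd
      refine ⟨fun β => -q β, fun β => ?_⟩
      rw [hq β]
      ring
    · rintro ⟨w, hw⟩ f hf
      obtain ⟨g, rfl⟩ := Ideal.mem_span_singleton.1 hf
      rw [Ideal.mem_span_singleton]
      have hkey := key_dvd P u (fun β => ⟨-(w β), by linear_combination hw β⟩) g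
      rw [mul_comm P g]
      exact hkey
  have part2 : ∀ u : degIdx n m → S n, ∀ w w' : degLtIdx n m → S n,
      (∀ β : degLtIdx n m,
        applyOp u ((∏ i, X i ^ (β : Fin n → ℕ) i) * P) + P * w β = 0) →
      (∀ β : degLtIdx n m,
        applyOp u ((∏ i, X i ^ (β : Fin n → ℕ) i) * P) + P * w' β = 0) →
      w = w' := by
    intro u w w' h1 h2
    funext β
    have h3 : P * w β = P * w' β := by linear_combination (h1 β) - (h2 β)
    exact mul_left_cancel₀ hP h3
  refine ⟨part1, part2, ?_⟩
  have hmemSyz : ∀ uw : ((degIdx n m → S n) × (degLtIdx n m → S n)),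
      uw ∈ SyzMod m P → ∀ β : degLtIdx n m,
        applyOp uw.1 ((∏ i, X i ^ (β : Fin n → ℕ) i) * P) + P * uw.2 β = 0 :=
    fun uw h => h
  let φ : SyzMod m P →ₗ[S n] Dm m P :=
    { toFun := fun uw => ⟨(uw : (degIdx n m → S n) × (degLtIdx n m → S n)).1,
        (part1 _).2 ⟨(uw : (degIdx n m → S n) × (degLtIdx n m → S n)).2,
          hmemSyz _ uw.2⟩⟩
      map_add' := fun a b => rfl
      map_smul' := fun s a => rfl }
  have hinj : Function.Injective φ := by
    intro a b hab
    have h1 : (a : (degIdx n m → S n) × (degLtIdx n m → S n)).1 =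
        (b : (degIdx n m → S n) × (degLtIdx n m → S n)).1 := congrArg Subtype.val hab
    apply Subtype.ext
    apply Prod.ext h1
    have ha := hmemSyz _ a.2
    have hb := hmemSyz _ b.2
    rw [← h1] at hb
    exact part2 _ _ _ ha hb
  have hsurj : Function.Surjective φ := by
    intro v
    obtain ⟨w, hw⟩ := (part1 v.1).1 v.2
    exact ⟨⟨((v : degIdx n m → S n), w), hw⟩, Subtype.ext rfl⟩
  exact ⟨LinearEquiv.ofBijective φ ⟨hinj, hsurj⟩, fun uw => rfl⟩


end
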